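/- Let F be any formal power series in countably many variables y_1, y_2, … with coefficients in R(T), and let s_θ(F) denote the series obtained by applying to each coefficient the ring automorphism of R(T) exchanging e^{a_1} and e^{a_n}. Then the series Ω(b_1|y)·s_θ(F) − Ω(b_n|y)·F is divisible by 1 − e^{a_n − a_1} in the power series ring R(T)[[y_1, y_2, …]]. -/

import Mathlib

noncomputable section

/-- `R(T) = ℤ[e^{±a_1},…,e^{±a_n}]`, the group algebra over `ℤ` of the free abelian
group `ℤⁿ` of characters. -/
abbrev RT (n : ℕ) : Type := AddMonoidAlgebra ℤ (Fin n →₀ ℤ)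

instance (n : ℕ) : IsDomain (RT n) := NoZeroDivisors.to_isDomain _

/-- `e^λ` for a character `λ`. -/
def eexp (n : ℕ) (lam : Fin n →₀ ℤ) : RT n := AddMonoidAlgebra.single lam 1

/-- `b_i = 1 - e^{-a_i}`. -/
def bb (n : ℕ) (i : Fin n) : RT n := 1 - eexp n (-(Finsupp.single i 1))

/-- The ring automorphism of `R(T)` induced by a permutation of the variables:
`e^{a_i} ↦ e^{a_{σ(i)}}`. -/
def permRT (n : ℕ) (σ : Equiv.Perm (Fin n)) : RT n ≃ₐ[ℤ] RT n :=
  AddMonoidAlgebra.domCongr ℤ ℤ (Finsupp.domCongr (σ : Fin n ≃ Fin n))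

/-- Index set of the variables `z_{ij}`, `1 ≤ i ≤ j ≤ n`. -/
abbrev Idx (n : ℕ) : Type := {p : Fin n × Fin n // p.1 ≤ p.2}

/-- An element of `Idx n` from natural-number data. -/
def mkIdx (n : ℕ) (a b : ℕ) (ha : a < n) (hb : b < n) (hab : a ≤ b) : Idx n :=
  ⟨(⟨a, ha⟩, ⟨b, hb⟩), Fin.mk_le_mk.mpr hab⟩

/-- The defining relation `(b_i - b_j)·z_{ij} - z_{i,j-1} + z_{i+1,j}` (0-based indices). -/
def relGen (n : ℕ) (i j : ℕ) (hi : i < n) (hj : j < n) (hij : i < j) :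
    MvPolynomial (Idx n) (RT n) :=
  MvPolynomial.C (bb n ⟨i, hi⟩ - bb n ⟨j, hj⟩) * MvPolynomial.X (mkIdx n i j hi hj hij.le)
    - MvPolynomial.X (mkIdx n i (j - 1) hi (by omega) (by omega))
    + MvPolynomial.X (mkIdx n (i + 1) j (by omega) hj (by omega))

/-- The ideal of relations of the centralizer family. -/
def centIdeal (n : ℕ) : Ideal (MvPolynomial (Idx n) (RT n)) :=
  Ideal.span {f | ∃ (i j : ℕ) (hi : i < n) (hj : j < n) (hij : i < j), f = relGen n i j hi hj hij}

/-- The ring `R = R(T)[z_{ij}]/I`. -/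
abbrev centRing (n : ℕ) : Type := MvPolynomial (Idx n) (RT n) ⧸ centIdeal n

/-- The class of the generator `z_{ij}` in `R` (0-based indices). -/
def zbar (n : ℕ) (i j : ℕ) (hi : i < n) (hj : j < n) (hij : i ≤ j) : centRing n :=
  Ideal.Quotient.mk (centIdeal n) (MvPolynomial.X (mkIdx n i j hi hj hij))


/-- `Ω(b|y)`: the formal power series in `y_1, y_2, …` whose coefficient on each monomial of
total degree `d` is `b^d`, i.e. `∏_{j ≥ 1} (1 - b y_j)⁻¹`. -/
def Omg (n : ℕ) (b : RT n) : MvPowerSeries ℕ (RT n) :=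
  fun d => b ^ (d.sum fun _ k => k)

lemma eexp_mul (n : ℕ) (a b : Fin n →₀ ℤ) : eexp n a * eexp n b = eexp n (a + b) := by
  simp [eexp, AddMonoidAlgebra.single_mul_single]

lemma eexp_zero (n : ℕ) : eexp n 0 = 1 := rfl

lemma eexp_nsmul (n : ℕ) (s : Fin n →₀ ℤ) (m : ℕ) : eexp n (m • s) = eexp n s ^ m := by
  induction m with
  | zero => simp [eexp_zero]
  | succ k ih => rw [succ_nsmul, ← eexp_mul, ih, pow_succ]

lemma dvd_eexp_zsmul (n : ℕ) (s : Fin n →₀ ℤ) (k : ℤ) :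
    (1 - eexp n s) ∣ eexp n (k • s) - 1 := by
  have hpos : ∀ m : ℕ, (1 - eexp n s) ∣ eexp n s ^ m - 1 := by
    intro m
    have := sub_dvd_pow_sub_pow (eexp n s) 1 m
    rw [one_pow] at this
    rw [← neg_dvd, neg_sub]
    exact this
  rcases Int.eq_nat_or_neg k with ⟨m, rfl | rfl⟩
  · rw [natCast_zsmul, eexp_nsmul]; exact hpos m
  · have hmul : eexp n ((-(m : ℤ)) • s) * eexp n s ^ m = 1 := by
      rw [← eexp_nsmul, ← natCast_zsmul s m, eexp_mul, neg_smul,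
        neg_add_cancel, eexp_zero]
    have : eexp n ((-(m : ℤ)) • s) - 1 = eexp n ((-(m : ℤ)) • s) * (1 - eexp n s ^ m) := by
      rw [mul_sub, hmul, mul_one]
    rw [this]
    exact Dvd.dvd.mul_left (dvd_sub_comm.mp (hpos m)) _

lemma swap_decomp (n : ℕ) (i0 i1 : Fin n) (h : i0 ≠ i1) (lam : Fin n →₀ ℤ) :
    Finsupp.equivMapDomain (Equiv.swap i0 i1) lam
      = lam + (lam i0 - lam i1) • (Finsupp.single i1 1 - Finsupp.single i0 1) := by
  ext j
  rw [Finsupp.equivMapDomain_apply]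
  rcases eq_or_ne j i0 with rfl | h0
  · simp [Equiv.swap_apply_def, h, Finsupp.single_apply, h.symm]
  · rcases eq_or_ne j i1 with rfl | h1
    · simp [Equiv.swap_apply_def, h, Finsupp.single_apply, h.symm]
    · simp [Equiv.swap_apply_def, h0, h1, Finsupp.single_apply, Ne.symm h0, Ne.symm h1]

lemma dvd_perm_sub (n : ℕ) (i0 i1 : Fin n) (h : i0 ≠ i1) (x : RT n) :
    (1 - eexp n (Finsupp.single i1 1 - Finsupp.single i0 1))
      ∣ permRT n (Equiv.swap i0 i1) x - x := by
  set c : RT n := 1 - eexp n (Finsupp.single i1 1 - Finsupp.single i0 1) with hc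
  set Q := RT n ⧸ Ideal.span {c}
  set mkQ : RT n →+* Q := Ideal.Quotient.mk (Ideal.span {c})
  suffices hs : mkQ (permRT n (Equiv.swap i0 i1) x) = mkQ x by
    rw [← Ideal.mem_span_singleton]
    rw [← Ideal.Quotient.eq_zero_iff_mem]
    rw [map_sub, hs, sub_self]
  induction x using AddMonoidAlgebra.induction_linear with
  | zero => simp
  | add f g hf hg =>
      have : permRT n (Equiv.swap i0 i1) (f + g)
          = permRT n (Equiv.swap i0 i1) f + permRT n (Equiv.swap i0 i1) g := map_add _ _ _
      rw [this, map_add, map_add, hf, hg]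
  | single a b =>
      have hb : (AddMonoidAlgebra.single a b : RT n) = b • AddMonoidAlgebra.single a (1 : ℤ) := by
        rw [AddMonoidAlgebra.smul_single]; norm_num
      have h1 : permRT n (Equiv.swap i0 i1) (b • AddMonoidAlgebra.single a (1 : ℤ))
          = b • permRT n (Equiv.swap i0 i1) (AddMonoidAlgebra.single a 1) := map_zsmul _ _ _
      rw [hb, h1, map_zsmul, map_zsmul]
      congr 1
      -- now the single a 1 case
      show mkQ (permRT n (Equiv.swap i0 i1) (eexp n a)) = mkQ (eexp n a)
      have h2 : permRT n (Equiv.swap i0 i1) (eexp n a)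
          = eexp n (Finsupp.equivMapDomain (Equiv.swap i0 i1) a) := by
        simp [permRT, eexp]
      rw [h2, swap_decomp n i0 i1 h a, ← eexp_mul]
      have h3 : mkQ (eexp n ((a i0 - a i1) • (Finsupp.single i1 1 - Finsupp.single i0 1))) = 1 := by
        have := dvd_eexp_zsmul n (Finsupp.single i1 1 - Finsupp.single i0 1) (a i0 - a i1)
        rw [← hc, ← Ideal.mem_span_singleton, ← Ideal.Quotient.eq_zero_iff_mem] at this
        rw [map_sub, map_one, sub_eq_zero] at this
        exact this
      rw [map_mul, h3, mul_one]

/-- for any power series `F`, the series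
`Ω(b_1|y)·s_θ(F) - Ω(b_n|y)·F` is divisible by `1 - e^{a_n - a_1}` in `R(T)[[y_1, y_2, …]]`,
where `s_θ` acts on coefficients by exchanging `e^{a_1}` and `e^{a_n}`. -/
theorem stmt13 (n : ℕ) (hn : 2 ≤ n) (F : MvPowerSeries ℕ (RT n)) :
    ∃ G : MvPowerSeries ℕ (RT n),
      Omg n (bb n ⟨0, by omega⟩)
          * MvPowerSeries.map
              ((permRT n (Equiv.swap ⟨0, by omega⟩ ⟨n - 1, by omega⟩)).toRingEquiv.toRingHom) F
        - Omg n (bb n ⟨n - 1, by omega⟩) * F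
      = MvPowerSeries.C
          (1 - eexp n (Finsupp.single ⟨n - 1, by omega⟩ 1 - Finsupp.single ⟨0, by omega⟩ 1))
          * G := by
  set i0 : Fin n := ⟨0, by omega⟩
  set i1 : Fin n := ⟨n - 1, by omega⟩
  have hne : i0 ≠ i1 := by
    simp only [i0, i1, ne_eq, Fin.mk.injEq]
    omega
  set c : RT n := 1 - eexp n (Finsupp.single i1 1 - Finsupp.single i0 1) with hc
  set σ : RT n →+* RT n := (permRT n (Equiv.swap i0 i1)).toRingEquiv.toRingHom with hσ
  have hσapp : ∀ x : RT n, σ x = permRT n (Equiv.swap i0 i1) x := fun x => rfl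
  -- c divides b_1 - b_n
  have hb : c ∣ bb n i0 - bb n i1 := by
    have h1 := dvd_perm_sub n i0 i1 hne (bb n i1)
    have h2 : permRT n (Equiv.swap i0 i1) (bb n i1) = bb n i0 := by
      simp only [bb, map_sub, map_one]
      congr 1
      have : permRT n (Equiv.swap i0 i1) (eexp n (-(Finsupp.single i1 1)))
          = eexp n (Finsupp.equivMapDomain (Equiv.swap i0 i1) (-(Finsupp.single i1 1))) := by
        simp [permRT, eexp]
      rw [this]
      congr 1
      rw [← Finsupp.single_neg, Finsupp.equivMapDomain_single, Equiv.swap_apply_right,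
        Finsupp.single_neg]
    rwa [h2] at h1
  set LHS : MvPowerSeries ℕ (RT n) :=
    Omg n (bb n i0) * MvPowerSeries.map σ F - Omg n (bb n i1) * F with hL
  have key : ∀ d : ℕ →₀ ℕ, c ∣ MvPowerSeries.coeff d LHS := by
    intro d
    rw [hL, map_sub, MvPowerSeries.coeff_mul, MvPowerSeries.coeff_mul, ← Finset.sum_sub_distrib]
    refine Finset.dvd_sum fun p _ => ?_
    have hO : ∀ (i : Fin n) (e : ℕ →₀ ℕ),
        MvPowerSeries.coeff e (Omg n (bb n i)) = bb n i ^ (e.sum fun _ k => k) := by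
      intro i e; rw [MvPowerSeries.coeff_apply]; rfl
    rw [hO, hO, MvPowerSeries.coeff_map]
    set k := p.1.sum fun _ k => k
    set x := MvPowerSeries.coeff p.2 F
    have h1 : c ∣ σ x - x := by rw [hσapp]; exact dvd_perm_sub n i0 i1 hne x
    have h2 : c ∣ bb n i0 ^ k - bb n i1 ^ k :=
      dvd_trans hb (sub_dvd_pow_sub_pow _ _ k)
    have : bb n i0 ^ k * σ x - bb n i1 ^ k * x
        = bb n i0 ^ k * (σ x - x) + (bb n i0 ^ k - bb n i1 ^ k) * x := by ring
    rw [this]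
    exact dvd_add (Dvd.dvd.mul_left h1 _) (h2.mul_right x)
  refine ⟨(fun d => (key d).choose : MvPowerSeries ℕ (RT n)), ?_⟩
  refine MvPowerSeries.ext fun d => ?_
  erw [MvPowerSeries.coeff_C_mul]
  have hG : MvPowerSeries.coeff d (fun e => (key e).choose : MvPowerSeries ℕ (RT n)) = (key d).choose :=
    MvPowerSeries.coeff_apply _ _
  erw [hG]
  exact (key d).choose_spec
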